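/- Let d ≥ 1. Suppose Φ, Φ', Φ_ε : ℝ → [0, ∞) are integrable functions such that Φ_ε(εx + (1−ε)y) ≥ Φ(x)^ε · Φ'(y)^{1−ε} for all x, y ∈ ℝ and a fixed 0 < ε < 1. Then ∫ Φ_ε ≥ min{∫ Φ, ∫ Φ'}. -/

import Mathlib

open MeasureTheory Set
open scoped Pointwise ENNReal NNReal


lemma bm_compact {K L : Set ℝ} (hK : IsCompact K) (hL : IsCompact L)
    (hKne : K.Nonempty) (hLne : L.Nonempty) :
    volume K + volume L ≤ volume (K + L) := by
  set a := sSup K with ha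
  set b := sInf L with hb
  have haK : a ∈ K := hK.sSup_mem hKne
  have hbL : b ∈ L := hL.sInf_mem hLne
  have h1 : b +ᵥ (K \ {a}) ⊆ (K + L) ∩ Iio (a + b) := by
    rintro _ ⟨x, ⟨hxK, hxa⟩, rfl⟩
    have hxa' : x < a := lt_of_le_of_ne (le_csSup hK.bddAbove hxK) (by simpa using hxa)
    constructor
    · show b + x ∈ K + L
      rw [show b + x = x + b from add_comm _ _]; exact add_mem_add hxK hbL
    · show b + x ∈ Iio (a + b)
      simp only [mem_Iio]; linarith
  have h2 : a +ᵥ L ⊆ (K + L) ∩ Ici (a + b) := by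
    rintro _ ⟨y, hyL, rfl⟩
    refine ⟨add_mem_add haK hyL, ?_⟩
    show a + b ≤ a + y
    exact add_le_add le_rfl (csInf_le hL.bddBelow hyL)
  have key : volume ((K + L) ∩ Iio (a + b)) + volume ((K + L) \ Iio (a + b)) = volume (K + L) :=
    measure_inter_add_diff _ measurableSet_Iio
  have e1 : volume K ≤ volume ((K + L) ∩ Iio (a + b)) := by
    calc volume K = volume (K \ {a}) := (measure_diff_null (measure_singleton a)).symm
    _ = volume (b +ᵥ (K \ {a})) := (measure_vadd (μ := volume) b _).symm
    _ ≤ _ := measure_mono h1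
  have e2 : volume L ≤ volume ((K + L) \ Iio (a + b)) := by
    calc volume L = volume (a +ᵥ L) := (measure_vadd (μ := volume) a L).symm
    _ ≤ volume ((K + L) ∩ Ici (a + b)) := measure_mono h2
    _ = _ := by congr 1; ext x; simp [not_lt]
  calc volume K + volume L ≤ volume ((K + L) ∩ Iio (a + b)) + volume ((K + L) \ Iio (a + b)) :=
        add_le_add e1 e2
  _ = volume (K + L) := key

lemma bm_key {ε : ℝ} (hε0 : 0 < ε) (hε1 : ε < 1) {S T U : Set ℝ}
    (hS : NullMeasurableSet S volume) (hT : NullMeasurableSet T volume)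
    (hSne : S.Nonempty) (hTne : T.Nonempty) (hSfin : volume S ≠ ⊤) (hTfin : volume T ≠ ⊤)
    (hU : ∀ x ∈ S, ∀ y ∈ T, ε * x + (1 - ε) * y ∈ U) :
    ENNReal.ofReal ε * volume S + ENNReal.ofReal (1 - ε) * volume T ≤ volume U := by
  obtain ⟨S₀, hS₀sub, hS₀m, hS₀eq⟩ := hS.exists_measurable_subset_ae_eq
  obtain ⟨T₀, hT₀sub, hT₀m, hT₀eq⟩ := hT.exists_measurable_subset_ae_eq
  have hS₀vol : volume S₀ = volume S := measure_congr hS₀eq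
  have hT₀vol : volume T₀ = volume T := measure_congr hT₀eq
  refine ENNReal.le_of_forall_pos_le_add fun δ hδ _ => ?_
  have hδ2 : ((δ : ℝ≥0∞) / 2) ≠ 0 := by
    simp [ENNReal.div_eq_zero_iff, hδ.ne']
  obtain ⟨K, hKsub, hKc, hKvol⟩ := hS₀m.exists_isCompact_lt_add
    (by rw [hS₀vol]; exact hSfin) hδ2
  obtain ⟨L, hLsub, hLc, hLvol⟩ := hT₀m.exists_isCompact_lt_add
    (by rw [hT₀vol]; exact hTfin) hδ2
  obtain ⟨x₀, hx₀⟩ := hSne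
  obtain ⟨y₀, hy₀⟩ := hTne
  set K' := K ∪ {x₀} with hK'
  set L' := L ∪ {y₀} with hL'
  have hK'c : IsCompact K' := hKc.union isCompact_singleton
  have hL'c : IsCompact L' := hLc.union isCompact_singleton
  have hK'S : K' ⊆ S := union_subset (hKsub.trans hS₀sub) (by simpa using hx₀)
  have hL'T : L' ⊆ T := union_subset (hLsub.trans hT₀sub) (by simpa using hy₀)
  have hMsub : ε • K' + (1 - ε) • L' ⊆ U := by
    rintro _ ⟨_, ⟨x, hx, rfl⟩, _, ⟨y, hy, rfl⟩, rfl⟩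
    exact hU x (hK'S hx) y (hL'T hy)
  have hεK : volume (ε • K') = ENNReal.ofReal ε * volume K' := by
    rw [Measure.addHaar_smul]
    congr 2
    simp [abs_of_pos hε0]
  have hεL : volume ((1 - ε) • L') = ENNReal.ofReal (1 - ε) * volume L' := by
    rw [Measure.addHaar_smul]
    congr 2
    simp [abs_of_pos (by linarith : (0:ℝ) < 1 - ε)]
  have hbm : volume (ε • K') + volume ((1 - ε) • L') ≤ volume (ε • K' + (1 - ε) • L') :=
    bm_compact (hK'c.smul ε) (hL'c.smul _) (hKne := ⟨ε • x₀, Set.smul_mem_smul_set (mem_union_right _ rfl)⟩)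
      (hLne := ⟨(1 - ε) • y₀, Set.smul_mem_smul_set (mem_union_right _ rfl)⟩)
  have hεle : ENNReal.ofReal ε ≤ 1 := by
    simpa using ENNReal.ofReal_le_ofReal hε1.le
  have hεle' : ENNReal.ofReal (1 - ε) ≤ 1 := by
    simpa using ENNReal.ofReal_le_ofReal (by linarith : 1 - ε ≤ 1)
  calc ENNReal.ofReal ε * volume S + ENNReal.ofReal (1 - ε) * volume T
      ≤ ENNReal.ofReal ε * (volume K + δ / 2) + ENNReal.ofReal (1 - ε) * (volume L + δ / 2) := by
        gcongr
        · rw [← hS₀vol]; exact hKvol.le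
        · rw [← hT₀vol]; exact hLvol.le
    _ ≤ (ENNReal.ofReal ε * volume K' + ENNReal.ofReal (1 - ε) * volume L') + δ := by
        rw [mul_add, mul_add]
        have h1 : ENNReal.ofReal ε * (δ / 2) ≤ δ / 2 := by
          calc ENNReal.ofReal ε * (δ/2) ≤ 1 * (δ/2) := by gcongr
          _ = δ/2 := one_mul _
        have h2 : ENNReal.ofReal (1 - ε) * (δ / 2) ≤ δ / 2 := by
          calc ENNReal.ofReal (1-ε) * (δ/2) ≤ 1 * (δ/2) := by gcongr
          _ = δ/2 := one_mul _
        have h3 : volume K ≤ volume K' := measure_mono subset_union_left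
        have h4 : volume L ≤ volume L' := measure_mono subset_union_left
        calc ENNReal.ofReal ε * volume K + ENNReal.ofReal ε * (δ/2)
              + (ENNReal.ofReal (1-ε) * volume L + ENNReal.ofReal (1-ε) * (δ/2))
            ≤ ENNReal.ofReal ε * volume K' + δ/2
              + (ENNReal.ofReal (1-ε) * volume L' + δ/2) := by gcongr
          _ = (ENNReal.ofReal ε * volume K' + ENNReal.ofReal (1-ε) * volume L') + (δ/2 + δ/2) := by
              ring
          _ = _ := by rw [ENNReal.add_halves]
    _ ≤ volume (ε • K' + (1 - ε) • L') + δ := by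
        rw [← hεK, ← hεL]; gcongr
    _ ≤ volume U + δ := by gcongr

lemma lint_eq_tail {f : ℝ → ℝ} (hf0 : ∀ x, 0 ≤ f x) (hfm : AEMeasurable f volume) :
    ∫⁻ x, ENNReal.ofReal (f x) = ∫⁻ s in Ioi (0:ℝ), volume {x | s < f x} :=
  lintegral_eq_lintegral_meas_lt volume (Filter.Eventually.of_forall hf0) hfm

lemma lint_lt_top {f : ℝ → ℝ} (hf : Integrable f) :
    ∫⁻ x, ENNReal.ofReal (f x) < ⊤ := by
  refine lt_of_le_of_lt ?_ hf.2
  exact lintegral_mono fun x => Real.ofReal_le_enorm (f x)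

lemma tail_ne_top {f : ℝ → ℝ} (hf : Integrable f) {s : ℝ} (hs : 0 < s) :
    volume {x | s < f x} ≠ ⊤ := by
  have hsub : {x | s < f x} ⊆ {x : ℝ | ENNReal.ofReal s ≤ ENNReal.ofReal (f x)} := fun x hx =>
    ENNReal.ofReal_le_ofReal (le_of_lt hx)
  have hm : AEMeasurable (fun x => ENNReal.ofReal (f x)) volume :=
    ENNReal.measurable_ofReal.comp_aemeasurable hf.aemeasurable
  have markov := mul_meas_ge_le_lintegral₀ hm (ENNReal.ofReal s)
  intro htop
  have h1 : volume {x : ℝ | ENNReal.ofReal s ≤ ENNReal.ofReal (f x)} = ⊤ :=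
    top_le_iff.mp (htop ▸ measure_mono hsub)
  rw [h1, ENNReal.mul_top (ENNReal.ofReal_pos.2 hs).ne'] at markov
  exact (lint_lt_top hf).ne (top_le_iff.mp markov)

lemma tail_nullm {f : ℝ → ℝ} (hf : Integrable f) (s : ℝ) :
    NullMeasurableSet {x | s < f x} volume :=
  nullMeasurableSet_lt aemeasurable_const hf.aemeasurable

lemma exists_tail_zero {ε : ℝ} (hε0 : 0 < ε) (hε1 : ε < 1) {f g h : ℝ → ℝ}
    (hf : Integrable f) (hg : Integrable g) (hh : Integrable h)
    (hh0 : ∀ x, 0 ≤ h x)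
    (hyp : ∀ x y, f x ^ ε * g y ^ (1 - ε) ≤ h (ε * x + (1 - ε) * y))
    (hgpos : ∃ t, 0 < t ∧ volume {x | t < g x} ≠ 0) :
    ∃ s, 0 < s ∧ volume {x | s < f x} = 0 := by
  by_contra hcon
  push_neg at hcon
  obtain ⟨t, ht0, htg⟩ := hgpos
  set m := ENNReal.ofReal (1 - ε) * volume {x | t < g x} with hm
  have hm0 : m ≠ 0 :=
    mul_ne_zero (ENNReal.ofReal_pos.2 (by linarith)).ne' htg
  have key : ∀ c : ℝ, 0 < c → m ≤ volume {x | c ≤ h x} := by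
    intro c hc
    set s := max 1 ((c * t ^ (ε - 1)) ^ ε⁻¹) with hs
    have hs0 : 0 < s := lt_of_lt_of_le one_pos (le_max_left _ _)
    have hct : 0 < c * t ^ (ε - 1) := mul_pos hc (Real.rpow_pos_of_pos ht0 _)
    have hsc : c ≤ s ^ ε * t ^ (1 - ε) := by
      have h2 : ((c * t ^ (ε - 1)) ^ ε⁻¹) ^ ε = c * t ^ (ε - 1) :=
        Real.rpow_inv_rpow hct.le hε0.ne'
      have h3 : c * t ^ (ε - 1) ≤ s ^ ε := by
        rw [← h2]
        exact Real.rpow_le_rpow (Real.rpow_nonneg hct.le _) (le_max_right _ _) hε0.le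
      calc c = c * t ^ (ε - 1) * t ^ (1 - ε) := by
            rw [mul_assoc, ← Real.rpow_add ht0]; norm_num
      _ ≤ s ^ ε * t ^ (1 - ε) := by
            have : (0:ℝ) ≤ t ^ (1 - ε) := (Real.rpow_pos_of_pos ht0 _).le
            nlinarith
    have hbm := bm_key hε0 hε1 (tail_nullm hf s) (tail_nullm hg t)
      (nonempty_of_measure_ne_zero (hcon s hs0)) (nonempty_of_measure_ne_zero htg)
      (tail_ne_top hf hs0) (tail_ne_top hg ht0) (U := {x | c ≤ h x}) ?_
    · exact le_trans le_add_self hbm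
    · intro x hx y hy
      have hx' : s < f x := hx
      have hy' : t < g y := hy
      have : c ≤ f x ^ ε * g y ^ (1 - ε) := by
        refine hsc.trans (mul_le_mul (Real.rpow_le_rpow hs0.le hx'.le hε0.le)
          (Real.rpow_le_rpow ht0.le hy'.le (by linarith)) (Real.rpow_nonneg ht0.le _)
          (Real.rpow_nonneg (hs0.le.trans hx'.le) _))
      exact this.trans (hyp x y)
  have hI3 : ∀ n : ℕ, (n : ℝ≥0∞) * m ≤ ∫⁻ x, ENNReal.ofReal (h x) := by
    intro n
    rw [lint_eq_tail hh0 hh.aemeasurable]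
    rcases Nat.eq_zero_or_pos n with rfl | hn
    · simp
    have hn0 : (0:ℝ) < n := by exact_mod_cast hn
    calc (n : ℝ≥0∞) * m = m * volume (Ioo (0:ℝ) n) := by
          rw [Real.volume_Ioo, sub_zero, ENNReal.ofReal_natCast, mul_comm]
    _ = ∫⁻ _ in Ioo (0:ℝ) n, m := (setLIntegral_const _ _).symm
    _ ≤ ∫⁻ s in Ioo (0:ℝ) n, volume {x | s < h x} := by
          refine setLIntegral_mono' measurableSet_Ioo fun s hs => ?_
          refine (key n hn0).trans (measure_mono fun x hx => ?_)
          exact lt_of_lt_of_le hs.2 hx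
    _ ≤ ∫⁻ s in Ioi (0:ℝ), volume {x | s < h x} :=
          lintegral_mono' (Measure.restrict_mono Ioo_subset_Ioi_self le_rfl) le_rfl
  have htop : (⊤ : ℝ≥0∞) ≤ ∫⁻ x, ENNReal.ofReal (h x) := by
    have h1 : (⨆ n : ℕ, (n : ℝ≥0∞) * m) ≤ ∫⁻ x, ENNReal.ofReal (h x) := iSup_le hI3
    rwa [← ENNReal.iSup_mul, ENNReal.iSup_natCast, ENNReal.top_mul hm0] at h1
  exact absurd (top_le_iff.mp htop) (lint_lt_top hh).ne

lemma lint_scale {f : ℝ → ℝ≥0∞} (hf : Measurable f) {k : ℝ} (hk : 0 < k) (C : ℝ) :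
    ∫⁻ t in Ioo (0:ℝ) C, f (k * t) = ENNReal.ofReal k⁻¹ * ∫⁻ s in Ioo (0:ℝ) (k * C), f s := by
  have hemb : MeasurableEmbedding (fun t : ℝ => k * t) := measurableEmbedding_mulLeft₀ hk.ne'
  have hpre : (fun t : ℝ => k * t) ⁻¹' (Ioo 0 (k * C)) = Ioo 0 C := by
    ext x
    simp only [mem_preimage, mem_Ioo]
    constructor
    · rintro ⟨h1, h2⟩
      refine ⟨?_, by nlinarith⟩
      nlinarith
    · rintro ⟨h1, h2⟩
      exact ⟨mul_pos hk h1, by nlinarith⟩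
  calc ∫⁻ t in Ioo (0:ℝ) C, f (k * t)
      = ∫⁻ s, f s ∂(Measure.map (fun t : ℝ => k * t) (volume.restrict (Ioo 0 C))) :=
        (hemb.lintegral_map _).symm
    _ = ∫⁻ s, f s ∂((Measure.map (fun t : ℝ => k * t) volume).restrict (Ioo 0 (k * C))) := by
        rw [hemb.restrict_map, hpre]
    _ = ∫⁻ s, f s ∂((ENNReal.ofReal |k⁻¹| • volume).restrict (Ioo 0 (k * C))) := by
        rw [Real.map_volume_mul_left hk.ne']
    _ = ENNReal.ofReal k⁻¹ * ∫⁻ s in Ioo (0:ℝ) (k * C), f s := by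
        rw [Measure.restrict_smul, lintegral_smul_measure, abs_of_pos (inv_pos.2 hk), smul_eq_mul]

lemma tail_restrict {f : ℝ → ℝ≥0∞} {A : ℝ} (hA : 0 < A) (h0 : ∀ s, A < s → f s = 0) :
    ∫⁻ s in Ioi (0:ℝ), f s = ∫⁻ s in Ioo (0:ℝ) A, f s := by
  have hsplit : Ioi (0:ℝ) = Ioo 0 A ∪ Ici A := by
    ext x
    simp only [mem_Ioi, mem_union, mem_Ioo, mem_Ici]
    constructor
    · intro hx
      rcases lt_or_ge x A with h | h
      · exact Or.inl ⟨hx, h⟩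
      · exact Or.inr h
    · rintro (⟨h, _⟩ | h)
      · exact h
      · linarith
  have hIci : ∫⁻ s in Ici A, f s = 0 := by
    rw [← Measure.restrict_congr_set Ioi_ae_eq_Ici]
    rw [setLIntegral_congr_fun measurableSet_Ioi
      (fun s hs => h0 s hs)]
    simp
  have hdisj : Disjoint (Ioo (0:ℝ) A) (Ici A) := by
    rw [Set.disjoint_left]
    rintro x ⟨_, hxA⟩ hx
    exact absurd hx (not_le.2 hxA)
  rw [hsplit, lintegral_union measurableSet_Ici hdisj, hIci, add_zero]

/-- One-dimensional Prékopa–Leindler combined with `A^ε B^{1-ε} ≥ min{A,B}`: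
the integral of `Φ_ε` is at least the min of the integrals of `Φ` and `Φ'`. -/
theorem stmt_13 (ε : ℝ) (hε0 : 0 < ε) (hε1 : ε < 1)
    (Φ Φ' Φε : ℝ → ℝ)
    (hΦ : Integrable Φ) (hΦ' : Integrable Φ') (hΦε : Integrable Φε)
    (hΦ0 : ∀ x, 0 ≤ Φ x) (hΦ'0 : ∀ x, 0 ≤ Φ' x) (hΦε0 : ∀ x, 0 ≤ Φε x)
    (hyp : ∀ x y : ℝ, Φ x ^ ε * Φ' y ^ (1 - ε) ≤ Φε (ε * x + (1 - ε) * y)) :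
    min (∫ x, Φ x) (∫ x, Φ' x) ≤ ∫ x, Φε x := by
  have hint1 : ∫ x, Φ x = (∫⁻ x, ENNReal.ofReal (Φ x)).toReal :=
    integral_eq_lintegral_of_nonneg_ae (Filter.Eventually.of_forall hΦ0) hΦ.1
  have hint2 : ∫ x, Φ' x = (∫⁻ x, ENNReal.ofReal (Φ' x)).toReal :=
    integral_eq_lintegral_of_nonneg_ae (Filter.Eventually.of_forall hΦ'0) hΦ'.1
  have hint3 : ∫ x, Φε x = (∫⁻ x, ENNReal.ofReal (Φε x)).toReal :=
    integral_eq_lintegral_of_nonneg_ae (Filter.Eventually.of_forall hΦε0) hΦε.1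
  set I₁ := ∫⁻ x, ENNReal.ofReal (Φ x) with hI₁def
  set I₂ := ∫⁻ x, ENNReal.ofReal (Φ' x) with hI₂def
  set I₃ := ∫⁻ x, ENNReal.ofReal (Φε x) with hI₃def
  have fin1 : I₁ ≠ ⊤ := (lint_lt_top hΦ).ne
  have fin2 : I₂ ≠ ⊤ := (lint_lt_top hΦ').ne
  have fin3 : I₃ ≠ ⊤ := (lint_lt_top hΦε).ne
  by_cases h1 : I₁ = 0
  · refine le_trans (min_le_left _ _) ?_
    rw [hint1, h1, hint3]
    simp [ENNReal.toReal_nonneg]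
  by_cases h2 : I₂ = 0
  · refine le_trans (min_le_right _ _) ?_
    rw [hint2, h2, hint3]
    simp [ENNReal.toReal_nonneg]
  suffices key : min I₁ I₂ ≤ I₃ by
    rw [hint1, hint2, hint3, ← ENNReal.toReal_min fin1 fin2]
    exact ENNReal.toReal_mono fin3 key
  set T₁ : ℝ → ℝ≥0∞ := fun s => volume {x | s < Φ x} with hT₁def
  set T₂ : ℝ → ℝ≥0∞ := fun s => volume {x | s < Φ' x} with hT₂def
  have hT₁m : Measurable T₁ :=
    Antitone.measurable fun s t hst => measure_mono fun x hx => lt_of_le_of_lt hst hx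
  have hT₂m : Measurable T₂ :=
    Antitone.measurable fun s t hst => measure_mono fun x hx => lt_of_le_of_lt hst hx
  have hlay1 : I₁ = ∫⁻ s in Ioi (0:ℝ), T₁ s := lint_eq_tail hΦ0 hΦ.aemeasurable
  have hlay2 : I₂ = ∫⁻ s in Ioi (0:ℝ), T₂ s := lint_eq_tail hΦ'0 hΦ'.aemeasurable
  have hlay3 : I₃ = ∫⁻ t in Ioi (0:ℝ), volume {x | t ≤ Φε x} :=
    lintegral_eq_lintegral_meas_le volume (Filter.Eventually.of_forall hΦε0) hΦε.aemeasurable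
  have hw1 : ∃ t, 0 < t ∧ T₁ t ≠ 0 := by
    by_contra hc
    push_neg at hc
    refine h1 ?_
    rw [hlay1, setLIntegral_congr_fun measurableSet_Ioi
      (fun s hs => hc s hs)]
    simp
  have hw2 : ∃ t, 0 < t ∧ T₂ t ≠ 0 := by
    by_contra hc
    push_neg at hc
    refine h2 ?_
    rw [hlay2, setLIntegral_congr_fun measurableSet_Ioi
      (fun s hs => hc s hs)]
    simp
  have hyp' : ∀ x y, Φ' x ^ (1 - ε) * Φ y ^ (1 - (1 - ε)) ≤ Φε ((1 - ε) * x + (1 - (1 - ε)) * y) := by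
    intro x y
    have h := hyp y x
    rw [show (1:ℝ) - (1 - ε) = ε by ring, mul_comm, add_comm]
    exact h
  have hS₁ne : ∃ s, 0 < s ∧ T₁ s = 0 := exists_tail_zero hε0 hε1 hΦ hΦ' hΦε hΦε0 hyp hw2
  have hS₂ne : ∃ s, 0 < s ∧ T₂ s = 0 :=
    exists_tail_zero (by linarith : (0:ℝ) < 1 - ε) (by linarith : 1 - ε < 1) hΦ' hΦ hΦε hΦε0
      hyp' hw1
  set S₁ := {s : ℝ | 0 < s ∧ T₁ s = 0} with hS₁def
  set S₂ := {s : ℝ | 0 < s ∧ T₂ s = 0} with hS₂def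
  have hS₁ne' : S₁.Nonempty := by obtain ⟨s, h, h'⟩ := hS₁ne; exact ⟨s, h, h'⟩
  have hS₂ne' : S₂.Nonempty := by obtain ⟨s, h, h'⟩ := hS₂ne; exact ⟨s, h, h'⟩
  have hS₁bdd : BddBelow S₁ := ⟨0, fun s hs => hs.1.le⟩
  have hS₂bdd : BddBelow S₂ := ⟨0, fun s hs => hs.1.le⟩
  set A := sInf S₁ with hAdef
  set B := sInf S₂ with hBdef
  have hApos : 0 < A := by
    obtain ⟨t, ht, htne⟩ := hw1
    refine lt_of_lt_of_le ht (le_csInf hS₁ne' fun s hs => ?_)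
    by_contra hlt
    push_neg at hlt
    exact htne (measure_mono_null (fun x hx => hlt.trans hx) hs.2)
  have hBpos : 0 < B := by
    obtain ⟨t, ht, htne⟩ := hw2
    refine lt_of_lt_of_le ht (le_csInf hS₂ne' fun s hs => ?_)
    by_contra hlt
    push_neg at hlt
    exact htne (measure_mono_null (fun x hx => hlt.trans hx) hs.2)
  have hAzero : ∀ s, A < s → T₁ s = 0 := by
    intro s hs
    obtain ⟨s', hs'S, hs's⟩ := exists_lt_of_csInf_lt hS₁ne' hs
    exact measure_mono_null (fun x hx => hs's.trans hx) hs'S.2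
  have hBzero : ∀ s, B < s → T₂ s = 0 := by
    intro s hs
    obtain ⟨s', hs'S, hs's⟩ := exists_lt_of_csInf_lt hS₂ne' hs
    exact measure_mono_null (fun x hx => hs's.trans hx) hs'S.2
  have hApos' : ∀ s, 0 < s → s < A → T₁ s ≠ 0 := fun s h0s hsA hz =>
    absurd (csInf_le hS₁bdd ⟨h0s, hz⟩) (not_le.2 hsA)
  have hBpos' : ∀ s, 0 < s → s < B → T₂ s ≠ 0 := fun s h0s hsB hz =>
    absurd (csInf_le hS₂bdd ⟨h0s, hz⟩) (not_le.2 hsB)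
  set C := A ^ ε * B ^ (1 - ε) with hCdef
  have hCpos : 0 < C := mul_pos (Real.rpow_pos_of_pos hApos _) (Real.rpow_pos_of_pos hBpos _)
  -- key pointwise-in-t inequality
  have key1 : ∀ t ∈ Ioo (0:ℝ) C,
      ENNReal.ofReal ε * T₁ (A / C * t) + ENNReal.ofReal (1 - ε) * T₂ (B / C * t)
        ≤ volume {x | t ≤ Φε x} := by
    intro t ht
    have hs₁pos : 0 < A / C * t := mul_pos (div_pos hApos hCpos) ht.1
    have hs₂pos : 0 < B / C * t := mul_pos (div_pos hBpos hCpos) ht.1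
    have hs₁A : A / C * t < A := by
      rw [div_mul_eq_mul_div, div_lt_iff₀ hCpos]
      nlinarith [ht.2, hApos]
    have hs₂B : B / C * t < B := by
      rw [div_mul_eq_mul_div, div_lt_iff₀ hCpos]
      nlinarith [ht.2, hBpos]
    have hprod : (A / C * t) ^ ε * (B / C * t) ^ (1 - ε) = t := by
      have e1 : A / C * t = A * (t / C) := by ring
      have e2 : B / C * t = B * (t / C) := by ring
      have htC : 0 < t / C := div_pos ht.1 hCpos
      rw [e1, e2, Real.mul_rpow hApos.le htC.le, Real.mul_rpow hBpos.le htC.le]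
      calc A ^ ε * (t / C) ^ ε * (B ^ (1 - ε) * (t / C) ^ (1 - ε))
          = (A ^ ε * B ^ (1 - ε)) * ((t / C) ^ ε * (t / C) ^ (1 - ε)) := by ring
        _ = C * (t / C) ^ (1:ℝ) := by rw [← Real.rpow_add htC]; norm_num; exact Or.inl hCdef.symm
        _ = t := by rw [Real.rpow_one]; field_simp
    refine bm_key hε0 hε1 (tail_nullm hΦ _) (tail_nullm hΦ' _)
      (nonempty_of_measure_ne_zero (hApos' _ hs₁pos hs₁A))
      (nonempty_of_measure_ne_zero (hBpos' _ hs₂pos hs₂B))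
      (tail_ne_top hΦ hs₁pos) (tail_ne_top hΦ' hs₂pos) ?_
    intro x hx y hy
    have hx' : A / C * t < Φ x := hx
    have hy' : B / C * t < Φ' y := hy
    show t ≤ Φε (ε * x + (1 - ε) * y)
    calc t = (A / C * t) ^ ε * (B / C * t) ^ (1 - ε) := hprod.symm
      _ ≤ Φ x ^ ε * Φ' y ^ (1 - ε) :=
          mul_le_mul (Real.rpow_le_rpow hs₁pos.le hx'.le hε0.le)
            (Real.rpow_le_rpow hs₂pos.le hy'.le (by linarith))
            (Real.rpow_nonneg hs₂pos.le _)
            (Real.rpow_nonneg (hs₁pos.le.trans hx'.le) _)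
      _ ≤ _ := hyp x y
  -- integrate
  have hchain : ENNReal.ofReal ε * (ENNReal.ofReal (C / A) * I₁)
      + ENNReal.ofReal (1 - ε) * (ENNReal.ofReal (C / B) * I₂) ≤ I₃ := by
    have hm1 : Measurable fun t : ℝ => T₁ (A / C * t) := hT₁m.comp (measurable_const_mul _)
    have hm2 : Measurable fun t : ℝ => T₂ (B / C * t) := hT₂m.comp (measurable_const_mul _)
    have hsc1 : ∫⁻ t in Ioo (0:ℝ) C, T₁ (A / C * t) = ENNReal.ofReal (C / A) * I₁ := by
      rw [lint_scale hT₁m (div_pos hApos hCpos) C]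
      rw [show A / C * C = A by field_simp]
      rw [show (A / C)⁻¹ = C / A by field_simp]
      rw [hlay1, tail_restrict hApos hAzero]
    have hsc2 : ∫⁻ t in Ioo (0:ℝ) C, T₂ (B / C * t) = ENNReal.ofReal (C / B) * I₂ := by
      rw [lint_scale hT₂m (div_pos hBpos hCpos) C]
      rw [show B / C * C = B by field_simp]
      rw [show (B / C)⁻¹ = C / B by field_simp]
      rw [hlay2, tail_restrict hBpos hBzero]
    calc ENNReal.ofReal ε * (ENNReal.ofReal (C / A) * I₁)
        + ENNReal.ofReal (1 - ε) * (ENNReal.ofReal (C / B) * I₂)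
        = ENNReal.ofReal ε * (∫⁻ t in Ioo (0:ℝ) C, T₁ (A / C * t))
          + ENNReal.ofReal (1 - ε) * (∫⁻ t in Ioo (0:ℝ) C, T₂ (B / C * t)) := by
          rw [hsc1, hsc2]
      _ = ∫⁻ t in Ioo (0:ℝ) C,
            (ENNReal.ofReal ε * T₁ (A / C * t) + ENNReal.ofReal (1 - ε) * T₂ (B / C * t)) := by
          rw [lintegral_add_left (hm1.const_mul _), lintegral_const_mul _ hm1,
            lintegral_const_mul _ hm2]
      _ ≤ ∫⁻ t in Ioo (0:ℝ) C, volume {x | t ≤ Φε x} :=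
          setLIntegral_mono' measurableSet_Ioo key1
      _ ≤ ∫⁻ t in Ioi (0:ℝ), volume {x | t ≤ Φε x} :=
          lintegral_mono' (Measure.restrict_mono Ioo_subset_Ioi_self le_rfl) le_rfl
      _ = I₃ := hlay3.symm
  -- final real arithmetic
  refine le_trans ?_ hchain
  set a := I₁.toReal with hadef
  set b := I₂.toReal with hbdef
  have hapos : 0 < a := ENNReal.toReal_pos h1 fin1
  have hbpos : 0 < b := ENNReal.toReal_pos h2 fin2
  have hreal : min a b ≤ ε * (C / A * a) + (1 - ε) * (C / B * b) := by
    have hgm : (C / A * a) ^ ε * (C / B * b) ^ (1 - ε)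
        ≤ ε * (C / A * a) + (1 - ε) * (C / B * b) :=
      Real.geom_mean_le_arith_mean2_weighted hε0.le (by linarith)
        (by positivity) (by positivity) (by ring)
    have hfactor : (C / A * a) ^ ε * (C / B * b) ^ (1 - ε) = a ^ ε * b ^ (1 - ε) := by
      rw [Real.mul_rpow (by positivity) hapos.le, Real.mul_rpow (by positivity) hbpos.le,
        Real.div_rpow hCpos.le hApos.le, Real.div_rpow hCpos.le hBpos.le]
      have : C ^ ε / A ^ ε * (C ^ (1 - ε) / B ^ (1 - ε)) = 1 := by
        rw [div_mul_div_comm, ← Real.rpow_add hCpos]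
        norm_num
        rw [hCdef]
        field_simp
      calc C ^ ε / A ^ ε * a ^ ε * (C ^ (1 - ε) / B ^ (1 - ε) * b ^ (1 - ε))
          = (C ^ ε / A ^ ε * (C ^ (1 - ε) / B ^ (1 - ε))) * (a ^ ε * b ^ (1 - ε)) := by ring
        _ = a ^ ε * b ^ (1 - ε) := by rw [this, one_mul]
    have hmin : min a b ≤ a ^ ε * b ^ (1 - ε) := by
      have h1' : (min a b) ^ ε ≤ a ^ ε :=
        Real.rpow_le_rpow (le_min hapos.le hbpos.le) (min_le_left _ _) hε0.le
      have h2' : (min a b) ^ (1 - ε) ≤ b ^ (1 - ε) :=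
        Real.rpow_le_rpow (le_min hapos.le hbpos.le) (min_le_right _ _) (by linarith)
      have hminpos : 0 < min a b := lt_min hapos hbpos
      calc min a b = (min a b) ^ ε * (min a b) ^ (1 - ε) := by
            rw [← Real.rpow_add hminpos]; norm_num
        _ ≤ a ^ ε * b ^ (1 - ε) :=
            mul_le_mul h1' h2' (Real.rpow_nonneg hminpos.le _) (Real.rpow_nonneg hapos.le _)
    exact hmin.trans (hfactor ▸ hgm)
  -- convert to ENNReal
  have hRHS : ENNReal.ofReal ε * (ENNReal.ofReal (C / A) * I₁)
      + ENNReal.ofReal (1 - ε) * (ENNReal.ofReal (C / B) * I₂)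
      = ENNReal.ofReal (ε * (C / A * a) + (1 - ε) * (C / B * b)) := by
    rw [ENNReal.ofReal_add (mul_nonneg hε0.le (mul_nonneg (div_pos hCpos hApos).le hapos.le))
      (mul_nonneg (by linarith : (0:ℝ) ≤ 1 - ε) (mul_nonneg (div_pos hCpos hBpos).le hbpos.le)),
      ENNReal.ofReal_mul hε0.le, ENNReal.ofReal_mul (by linarith : (0:ℝ) ≤ 1 - ε),
      ENNReal.ofReal_mul (div_pos hCpos hApos).le,
      ENNReal.ofReal_mul (div_pos hCpos hBpos).le,
      hadef, hbdef, ENNReal.ofReal_toReal fin1, ENNReal.ofReal_toReal fin2]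
  rw [hRHS]
  have hminval : min I₁ I₂ = ENNReal.ofReal (min a b) := by
    rw [← ENNReal.toReal_min fin1 fin2, ENNReal.ofReal_toReal]
    exact ne_top_of_le_ne_top fin1 (min_le_left _ _)
  rw [hminval]
  exact ENNReal.ofReal_le_ofReal hreal
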